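/- Let f : ℕ → ℕ be an arbitrary non-decreasing function and let d be a positive integer. Then there exist integers k₀ and n₀ such that if T is a rooted tree of depth at most d with at least n₀ leaves, then for some k ≤ k₀ there exists a vertex v of T that has at least f(k) children and such that the subtree of T rooted at each child of v has at most k leaves. -/

import Mathlib

/-- A finite rooted tree: each vertex is given by the list of subtrees rooted at its
children (a vertex with no children is a leaf). -/
inductive RTree : Type
  | node (ts : List RTree) : RTree

namespace RTree

/-- The children (subtrees) of the root. -/
def children : RTree → List RTree
  | node ts => ts

mutual
  /-- The number of leaves of a rooted tree. -/
  def numLeaves : RTree → ℕ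
    | node [] => 1
    | node (t :: ts) => numLeavesList (t :: ts)
  /-- Total number of leaves of a list of trees. -/
  def numLeavesList : List RTree → ℕ
    | [] => 0
    | t :: ts => numLeaves t + numLeavesList ts
end

mutual
  /-- The depth of a rooted tree: the maximum number of edges on a root-to-leaf path. -/
  def depth : RTree → ℕ
    | node [] => 0
    | node (t :: ts) => depthList (t :: ts) + 1
  /-- Maximum depth in a list of trees. -/
  def depthList : List RTree → ℕ
    | [] => 0
    | t :: ts => max (depth t) (depthList ts)
end

mutual
  /-- `Occurs v T`: `v` is a vertex of `T`, i.e. `v` is the subtree of `T` rooted at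
  some vertex of `T`. -/
  def Occurs : RTree → RTree → Prop
    | v, node ts => v = node ts ∨ OccursList v ts
  /-- `v` occurs in one of the trees of the list. -/
  def OccursList : RTree → List RTree → Prop
    | _, [] => False
    | v, t :: ts => Occurs v t ∨ OccursList v ts
end

end RTree

open RTree

mutual
theorem aux_numLeaves_pos : ∀ t : RTree, 1 ≤ numLeaves t
  | .node [] => le_refl 1
  | .node (t :: ts) => by
      have h1 := aux_numLeaves_pos t
      simp only [numLeaves, numLeavesList]
      omega
theorem aux_dummy : ∀ ts : List RTree, 0 ≤ numLeavesList ts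
  | _ => Nat.zero_le _
end

theorem depth_le_depthList {t : RTree} : ∀ {ts : List RTree}, t ∈ ts → t.depth ≤ depthList ts
  | a :: as, h => by
      rcases List.mem_cons.1 h with rfl | h
      · simp [depthList]
      · simp only [depthList]
        exact le_trans (depth_le_depthList h) (le_max_right _ _)

theorem numLeavesList_le {k : ℕ} : ∀ {ts : List RTree}, (∀ t ∈ ts, numLeaves t ≤ k) →
    numLeavesList ts ≤ ts.length * k
  | [], _ => by simp [numLeavesList]
  | a :: as, h => by
      simp only [numLeavesList, List.length_cons, Nat.succ_mul]
      have := numLeavesList_le (fun t ht => h t (List.mem_cons_of_mem _ ht))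
      have := h a List.mem_cons_self
      omega

theorem occursList_of_mem {v t : RTree} : ∀ {ts : List RTree}, t ∈ ts → Occurs v t →
    OccursList v ts
  | a :: as, h, hv => by
      rcases List.mem_cons.1 h with rfl | h
      · exact Or.inl hv
      · exact Or.inr (occursList_of_mem h hv)

theorem key (f : ℕ → ℕ) : ∀ d : ℕ, ∃ k₀ n₀ : ℕ, 2 ≤ n₀ ∧
    ∀ T : RTree, T.depth ≤ d → n₀ ≤ T.numLeaves →
      ∃ k ≤ k₀, ∃ v : RTree, RTree.Occurs v T ∧ f k ≤ v.children.length ∧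
        ∀ t ∈ v.children, t.numLeaves ≤ k := by
  intro d
  induction d with
  | zero =>
      refine ⟨0, 2, le_refl 2, fun T hT hn => ?_⟩
      obtain ⟨ts⟩ := T
      cases ts with
      | nil => simp [numLeaves] at hn
      | cons a as => simp [depth] at hT
  | succ d ih =>
      obtain ⟨k₀, n₀, hn₀2, H⟩ := ih
      refine ⟨max k₀ n₀, max 2 (n₀ * f n₀), le_max_left _ _, fun T hT hn => ?_⟩
      obtain ⟨ts⟩ := T
      cases ts with
      | nil =>
          exfalso
          have : numLeaves (RTree.node []) = 1 := rfl
          omega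
      | cons a as =>
          have hdep : ∀ t ∈ a :: as, depth t ≤ d := by
            intro t ht
            have h1 : depth (RTree.node (a :: as)) = depthList (a :: as) + 1 := rfl
            have := depth_le_depthList (t := t) ht
            omega
          by_cases hex : ∃ t ∈ a :: as, n₀ ≤ numLeaves t
          · obtain ⟨t, ht, hnt⟩ := hex
            obtain ⟨k, hk, v, hv, hfv, hvc⟩ := H t (hdep t ht) hnt
            exact ⟨k, le_trans hk (le_max_left _ _), v,
              Or.inr (occursList_of_mem ht hv), hfv, hvc⟩
          · push_neg at hex
            have hall : ∀ t ∈ a :: as, numLeaves t ≤ n₀ := fun t ht =>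
              le_of_lt (hex t ht)
            refine ⟨n₀, le_max_right _ _, RTree.node (a :: as), Or.inl rfl, ?_, hall⟩
            have h1 : numLeaves (RTree.node (a :: as)) = numLeavesList (a :: as) := rfl
            have h2 := numLeavesList_le hall
            have h3 : n₀ * f n₀ ≤ (a :: as).length * n₀ := by omega
            have h4 : 0 < n₀ := by omega
            show f n₀ ≤ (children (RTree.node (a :: as))).length
            have : children (RTree.node (a :: as)) = a :: as := rfl
            rw [this]
            by_contra hc
            push_neg at hc
            have : (a :: as).length * n₀ < f n₀ * n₀ := by
              exact (Nat.mul_lt_mul_right h4).2 hc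
            nlinarith [Nat.mul_comm n₀ (f n₀)]

/-- Let `f : ℕ → ℕ` be non-decreasing and `d` a positive integer.  There exist `k₀`
and `n₀` such that every rooted tree of depth at most `d` with at least `n₀` leaves
has, for some `k ≤ k₀`, a vertex with at least `f(k)` children such that the subtree
rooted at each child has at most `k` leaves. -/
theorem big_vertex_in_bounded_depth_tree (f : ℕ → ℕ) (hf : Monotone f)
    (d : ℕ) (hd : 0 < d) :
    ∃ k₀ n₀ : ℕ, ∀ T : RTree, T.depth ≤ d → n₀ ≤ T.numLeaves →
      ∃ k ≤ k₀, ∃ v : RTree, RTree.Occurs v T ∧ f k ≤ v.children.length ∧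
        ∀ t ∈ v.children, t.numLeaves ≤ k := by
  obtain ⟨k₀, n₀, _, H⟩ := key f d
  exact ⟨k₀, n₀, H⟩
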